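/- arXiv:2002.11875 — 4 statements merged into one kernel-verified Lean document; each statement's English description precedes it below -/
import Mathlib

section
/- Let X ⊆ ℝ^n and Y ⊆ ℝ^m be nonempty and f : ℝ^n × ℝ^m → ℝ. A pair (x*,y*) ∈ X × Y is a local minimax point of f if and only if (i) y* is a local maximizer of y ↦ f(x*,y) on Y, and (ii) there exists ε₀ > 0 such that for every ε ∈ (0, ε₀], x* is a local minimizer on X of the local upper envelope f̄_{ε,y*}. -/
open Filter

/-- Local upper envelope `f̄_{ε,y*}` relative to `Y`, in the extended reals. -/
noncomputable def envU {n m : ℕ}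
    (f : EuclideanSpace ℝ (Fin n) → EuclideanSpace ℝ (Fin m) → ℝ)
    (Y : Set (EuclideanSpace ℝ (Fin m))) (ystar : EuclideanSpace ℝ (Fin m)) (ε : ℝ)
    (x : EuclideanSpace ℝ (Fin n)) : EReal :=
  ⨆ y ∈ {y ∈ Y | ‖y - ystar‖ ≤ ε}, ((f x y : ℝ) : EReal)

/-- `(x*, y*)` is a local minimax point of `f` on `X × Y`. -/
def IsLocalMinimax {n m : ℕ} (X : Set (EuclideanSpace ℝ (Fin n)))
    (Y : Set (EuclideanSpace ℝ (Fin m)))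
    (f : EuclideanSpace ℝ (Fin n) → EuclideanSpace ℝ (Fin m) → ℝ)
    (xstar : EuclideanSpace ℝ (Fin n)) (ystar : EuclideanSpace ℝ (Fin m)) : Prop :=
  (∃ ε > (0 : ℝ), ∀ y ∈ Y, ‖y - ystar‖ ≤ ε → f xstar y ≤ f xstar ystar) ∧
  (∃ εseq : ℕ → ℝ, (∀ k, 0 < εseq k) ∧ Tendsto εseq atTop (nhds 0) ∧
    ∀ k, ∃ δ > (0 : ℝ), ∀ x ∈ X, ‖x - xstar‖ ≤ δ →
      envU f Y ystar (εseq k) xstar ≤ envU f Y ystar (εseq k) x)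

lemma envU_mono {n m : ℕ}
    (f : EuclideanSpace ℝ (Fin n) → EuclideanSpace ℝ (Fin m) → ℝ)
    (Y : Set (EuclideanSpace ℝ (Fin m))) (ystar : EuclideanSpace ℝ (Fin m))
    {ε ε' : ℝ} (h : ε ≤ ε') (x : EuclideanSpace ℝ (Fin n)) :
    envU f Y ystar ε x ≤ envU f Y ystar ε' x := by
  apply iSup₂_le
  intro y hy
  exact le_iSup₂ (f := fun y _ => ((f x y : ℝ) : EReal)) y ⟨hy.1, hy.2.trans h⟩

lemma envU_at_max {n m : ℕ}
    (f : EuclideanSpace ℝ (Fin n) → EuclideanSpace ℝ (Fin m) → ℝ)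
    (Y : Set (EuclideanSpace ℝ (Fin m))) {ystar : EuclideanSpace ℝ (Fin m)}
    (hyY : ystar ∈ Y) {ε : ℝ} (hε : 0 ≤ ε) {xstar : EuclideanSpace ℝ (Fin n)}
    (hmax : ∀ y ∈ Y, ‖y - ystar‖ ≤ ε → f xstar y ≤ f xstar ystar) :
    envU f Y ystar ε xstar = ((f xstar ystar : ℝ) : EReal) := by
  apply le_antisymm
  · exact iSup₂_le fun y hy => EReal.coe_le_coe_iff.mpr (hmax y hy.1 hy.2)
  · exact le_iSup₂ (f := fun y _ => ((f xstar y : ℝ) : EReal)) ystar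
      ⟨hyY, by simp [hε]⟩

/-- `(x*, y*)` is local minimax iff `y*` locally maximizes `f(x*, ·)` on `Y` and
there is `ε₀ > 0` such that for every `ε ∈ (0, ε₀]`, `x*` is a local minimizer of
the envelope `f̄_{ε,y*}` on `X`. -/
theorem isLocalMinimax_iff_forall_small_eps {n m : ℕ}
    (X : Set (EuclideanSpace ℝ (Fin n))) (Y : Set (EuclideanSpace ℝ (Fin m)))
    (hX : X.Nonempty) (hY : Y.Nonempty)
    (f : EuclideanSpace ℝ (Fin n) → EuclideanSpace ℝ (Fin m) → ℝ)
    (xstar : EuclideanSpace ℝ (Fin n)) (ystar : EuclideanSpace ℝ (Fin m))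
    (hxX : xstar ∈ X) (hyY : ystar ∈ Y) :
    IsLocalMinimax X Y f xstar ystar ↔
      ((∃ ε > (0 : ℝ), ∀ y ∈ Y, ‖y - ystar‖ ≤ ε → f xstar y ≤ f xstar ystar) ∧
       (∃ ε₀ > (0 : ℝ), ∀ ε : ℝ, 0 < ε → ε ≤ ε₀ →
         ∃ δ > (0 : ℝ), ∀ x ∈ X, ‖x - xstar‖ ≤ δ →
           envU f Y ystar ε xstar ≤ envU f Y ystar ε x)) := by
  constructor
  · rintro ⟨⟨ε₁, hε₁, hmax⟩, εseq, hpos, htend, hmin⟩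
    refine ⟨⟨ε₁, hε₁, hmax⟩, ε₁, hε₁, fun ε hε hεε₁ => ?_⟩
    -- pick k with εseq k ≤ ε
    obtain ⟨k, hk⟩ := (htend.eventually (gt_mem_nhds hε)).exists
    obtain ⟨δ, hδ, hδmin⟩ := hmin k
    refine ⟨δ, hδ, fun x hx hxd => ?_⟩
    have hke : εseq k ≤ ε := le_of_lt hk
    have h1 : envU f Y ystar ε xstar = ((f xstar ystar : ℝ) : EReal) :=
      envU_at_max f Y hyY hε.le (fun y hy hyε => hmax y hy (hyε.trans hεε₁))
    have h2 : envU f Y ystar (εseq k) xstar = ((f xstar ystar : ℝ) : EReal) :=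
      envU_at_max f Y hyY (hpos k).le
        (fun y hy hyε => hmax y hy (hyε.trans (hke.trans hεε₁)))
    calc envU f Y ystar ε xstar = envU f Y ystar (εseq k) xstar := by rw [h1, h2]
      _ ≤ envU f Y ystar (εseq k) x := hδmin x hx hxd
      _ ≤ envU f Y ystar ε x := envU_mono f Y ystar hke x
  · rintro ⟨h₁, ε₀, hε₀, hmin⟩
    refine ⟨h₁, fun k => ε₀ / (k + 1), fun k => by positivity, ?_, fun k => ?_⟩
    · have : Tendsto (fun k : ℕ => ε₀ * (1 / (k + 1))) atTop (nhds (ε₀ * 0)) :=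
        tendsto_one_div_add_atTop_nhds_zero_nat.const_mul ε₀
      simpa [div_eq_mul_inv, mul_comm] using this
    · refine hmin _ (by positivity) ?_
      rw [div_le_iff₀ (by positivity)]
      nlinarith [hε₀, (Nat.cast_nonneg k : (0:ℝ) ≤ k)]
end

section
/- Let X ⊆ ℝ^n and Y ⊆ ℝ^m be nonempty and f : ℝ^n × ℝ^m → ℝ. (a) Every local saddle point of f is a uniformly local minimax point of f. (b) If for every x ∈ X the function y ↦ f(x,y) is upper semicontinuous on Y, then every uniformly local minimax point of f is a local saddle point of f. -/
open Filter

/-- `(x*, y*)` is a uniformly local minimax point of `f` on `X × Y`: the defining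
sequence `(ε_n)` can be chosen together with a single `δ > 0` working for all `n`. -/
def IsUniformlyLocalMinimax {n m : ℕ} (X : Set (EuclideanSpace ℝ (Fin n)))
    (Y : Set (EuclideanSpace ℝ (Fin m)))
    (f : EuclideanSpace ℝ (Fin n) → EuclideanSpace ℝ (Fin m) → ℝ)
    (xstar : EuclideanSpace ℝ (Fin n)) (ystar : EuclideanSpace ℝ (Fin m)) : Prop :=
  (∃ ε > (0 : ℝ), ∀ y ∈ Y, ‖y - ystar‖ ≤ ε → f xstar y ≤ f xstar ystar) ∧
  (∃ εseq : ℕ → ℝ, (∀ k, 0 < εseq k) ∧ Tendsto εseq atTop (nhds 0) ∧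
    ∃ δ > (0 : ℝ), ∀ k, ∀ x ∈ X, ‖x - xstar‖ ≤ δ →
      envU f Y ystar (εseq k) xstar ≤ envU f Y ystar (εseq k) x)

/-- `(x⋆, y⋆)` is a local saddle point of `f` on `X × Y`. -/
def IsLocalSaddle {n m : ℕ} (X : Set (EuclideanSpace ℝ (Fin n)))
    (Y : Set (EuclideanSpace ℝ (Fin m)))
    (f : EuclideanSpace ℝ (Fin n) → EuclideanSpace ℝ (Fin m) → ℝ)
    (xstar : EuclideanSpace ℝ (Fin n)) (ystar : EuclideanSpace ℝ (Fin m)) : Prop :=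
  ∃ ε > (0 : ℝ), ∀ x ∈ X, ‖x - xstar‖ ≤ ε → ∀ y ∈ Y, ‖y - ystar‖ ≤ ε →
    f xstar y ≤ f xstar ystar ∧ f xstar ystar ≤ f x ystar

/-- (a) Every local saddle point is uniformly local minimax.  (b) If `f(x, ·)` is
upper semicontinuous on `Y` for every `x ∈ X`, then every uniformly local minimax
point is a local saddle point. -/
theorem localSaddle_iff_uniformlyLocalMinimax {n m : ℕ}
    (X : Set (EuclideanSpace ℝ (Fin n))) (Y : Set (EuclideanSpace ℝ (Fin m)))
    (hX : X.Nonempty) (hY : Y.Nonempty)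
    (f : EuclideanSpace ℝ (Fin n) → EuclideanSpace ℝ (Fin m) → ℝ) :
    (∀ xstar ∈ X, ∀ ystar ∈ Y,
        IsLocalSaddle X Y f xstar ystar → IsUniformlyLocalMinimax X Y f xstar ystar) ∧
    ((∀ x ∈ X, UpperSemicontinuousOn (f x) Y) →
      ∀ xstar ∈ X, ∀ ystar ∈ Y,
        IsUniformlyLocalMinimax X Y f xstar ystar → IsLocalSaddle X Y f xstar ystar) := by
  constructor
  · rintro xstar hxX ystar hyY ⟨ε, hε, hsad⟩
    constructor
    · exact ⟨ε, hε, fun y hy hyn => (hsad xstar hxX (by simpa using hε.le) y hy hyn).1⟩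
    · refine ⟨fun k => ε * (1/2)^k, fun k => by positivity, ?_, ε, hε, ?_⟩
      · have := (tendsto_pow_atTop_nhds_zero_of_lt_one (by norm_num : (0:ℝ) ≤ 1/2)
          (by norm_num : (1:ℝ)/2 < 1)).const_mul ε
        simpa using this
      · intro k x hx hxn
        have hle : ε * (1/2)^k ≤ ε := by
          nlinarith [pow_le_one₀ (by norm_num : (0:ℝ) ≤ 1/2) (by norm_num : (1:ℝ)/2 ≤ 1) (n := k)]
        have h1 : envU f Y ystar (ε * (1/2)^k) xstar ≤ ((f x ystar : ℝ) : EReal) := by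
          refine iSup₂_le fun y hy => ?_
          have := hsad x hx hxn y hy.1 (hy.2.trans hle)
          exact EReal.coe_le_coe_iff.2 (this.1.trans this.2)
        refine h1.trans ?_
        refine le_iSup₂_of_le ystar ⟨hyY, ?_⟩ le_rfl
        simp; positivity
  · rintro husc xstar hxX ystar hyY ⟨⟨ε0, hε0, hmax⟩, εseq, hpos, htend, δ, hδ, hmin⟩
    refine ⟨min ε0 δ, lt_min hε0 hδ, fun x hx hxn y hy hyn => ⟨?_, ?_⟩⟩
    · exact hmax y hy (hyn.trans (min_le_left _ _))
    · by_contra hlt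
      push_neg at hlt
      set c := (f x ystar + f xstar ystar)/2 with hc
      have h1 : f x ystar < c := by simp only [hc]; linarith
      have h2 : c < f xstar ystar := by simp only [hc]; linarith
      have husc' := husc x hx ystar hyY c h1
      rw [eventually_iff, Metric.mem_nhdsWithin_iff] at husc'
      obtain ⟨r, hr, hball⟩ := husc'
      obtain ⟨k, hk⟩ := (htend.eventually (gt_mem_nhds hr)).exists
      have henv : envU f Y ystar (εseq k) x ≤ ((c : ℝ) : EReal) := by
        refine iSup₂_le fun y' hy' => ?_
        refine EReal.coe_le_coe_iff.2 (le_of_lt (hball ⟨?_, hy'.1⟩))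
        rw [Metric.mem_ball, dist_eq_norm]
        exact lt_of_le_of_lt hy'.2 hk
      have hlow : ((f xstar ystar : ℝ) : EReal) ≤ envU f Y ystar (εseq k) xstar := by
        refine le_iSup₂_of_le ystar ⟨hyY, ?_⟩ le_rfl
        simp; exact (hpos k).le
      have := hlow.trans ((hmin k x hx (hxn.trans (min_le_right _ _))).trans henv)
      exact absurd (EReal.coe_le_coe_iff.1 this) (not_le.2 h2)
end

section
/- Let X ⊆ ℝ^n and Y ⊆ ℝ^m be nonempty closed convex sets and let f : ℝ^n × ℝ^m → ℝ be continuously differentiable. If (x*,y*) ∈ X × Y is a local minimax point of f, then for all x ∈ X and all y ∈ Y: ⟨∂_x f(x*,y*), x − x*⟩ ≥ 0 and ⟨∂_y f(x*,y*), y − y*⟩ ≤ 0. In particular, if x* is an interior point of X and y* is an interior point of Y, then ∂_x f(x*,y*) = 0 and ∂_y f(x*,y*) = 0. -/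
open Filter Topology
open scoped RealInnerProductSpace

lemma grad_pair_x {n m : ℕ}
    (f : EuclideanSpace ℝ (Fin n) → EuclideanSpace ℝ (Fin m) → ℝ)
    (hf : ContDiff ℝ 1 (fun p : EuclideanSpace ℝ (Fin n) × EuclideanSpace ℝ (Fin m) => f p.1 p.2))
    (xstar : EuclideanSpace ℝ (Fin n)) (ystar : EuclideanSpace ℝ (Fin m))
    (v : EuclideanSpace ℝ (Fin n)) :
    ⟪gradient (fun x' => f x' ystar) xstar, v⟫ =
      fderiv ℝ (fun p : EuclideanSpace ℝ (Fin n) × EuclideanSpace ℝ (Fin m) => f p.1 p.2)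
        (xstar, ystar) (v, 0) := by
  set D := fderiv ℝ (fun p : EuclideanSpace ℝ (Fin n) × EuclideanSpace ℝ (Fin m) => f p.1 p.2)
    (xstar, ystar) with hD
  set L := D.comp ((ContinuousLinearMap.id ℝ (EuclideanSpace ℝ (Fin n))).prod 0) with hL
  have hdF := (hf.differentiable one_ne_zero (xstar, ystar)).hasFDerivAt
  have hc : HasFDerivAt (fun x' : EuclideanSpace ℝ (Fin n) =>
      ((x', ystar) : EuclideanSpace ℝ (Fin n) × EuclideanSpace ℝ (Fin m)))
      ((ContinuousLinearMap.id ℝ (EuclideanSpace ℝ (Fin n))).prod 0) xstar :=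
    HasFDerivAt.prodMk (hasFDerivAt_id xstar) (hasFDerivAt_const _ _)
  have h1 : HasFDerivAt (fun x' => f x' ystar) L xstar := by
    have := hdF.comp xstar hc; exact this
  have h2 : HasGradientAt (fun x' => f x' ystar)
      ((InnerProductSpace.toDual ℝ _).symm L) xstar := h1.hasGradientAt
  have h3 : gradient (fun x' => f x' ystar) xstar = (InnerProductSpace.toDual ℝ _).symm L :=
    (h2.differentiableAt.hasGradientAt).unique h2
  rw [h3, InnerProductSpace.toDual_symm_apply]
  simp [hL]

lemma grad_pair_y {n m : ℕ}
    (f : EuclideanSpace ℝ (Fin n) → EuclideanSpace ℝ (Fin m) → ℝ)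
    (hf : ContDiff ℝ 1 (fun p : EuclideanSpace ℝ (Fin n) × EuclideanSpace ℝ (Fin m) => f p.1 p.2))
    (xstar : EuclideanSpace ℝ (Fin n)) (ystar : EuclideanSpace ℝ (Fin m))
    (w : EuclideanSpace ℝ (Fin m)) :
    ⟪gradient (fun y' => f xstar y') ystar, w⟫ =
      fderiv ℝ (fun p : EuclideanSpace ℝ (Fin n) × EuclideanSpace ℝ (Fin m) => f p.1 p.2)
        (xstar, ystar) (0, w) := by
  set D := fderiv ℝ (fun p : EuclideanSpace ℝ (Fin n) × EuclideanSpace ℝ (Fin m) => f p.1 p.2)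
    (xstar, ystar) with hD
  set L := D.comp ((0 : EuclideanSpace ℝ (Fin m) →L[ℝ] EuclideanSpace ℝ (Fin n)).prod
    (ContinuousLinearMap.id ℝ (EuclideanSpace ℝ (Fin m)))) with hL
  have hdF := (hf.differentiable one_ne_zero (xstar, ystar)).hasFDerivAt
  have hc : HasFDerivAt (fun y' : EuclideanSpace ℝ (Fin m) =>
      ((xstar, y') : EuclideanSpace ℝ (Fin n) × EuclideanSpace ℝ (Fin m)))
      ((0 : EuclideanSpace ℝ (Fin m) →L[ℝ] EuclideanSpace ℝ (Fin n)).prod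
        (ContinuousLinearMap.id ℝ (EuclideanSpace ℝ (Fin m)))) ystar :=
    HasFDerivAt.prodMk (hasFDerivAt_const _ _) (hasFDerivAt_id ystar)
  have h1 : HasFDerivAt (fun y' => f xstar y') L ystar := hdF.comp ystar hc
  have h2 : HasGradientAt (fun y' => f xstar y')
      ((InnerProductSpace.toDual ℝ _).symm L) ystar := h1.hasGradientAt
  have h3 : gradient (fun y' => f xstar y') ystar = (InnerProductSpace.toDual ℝ _).symm L :=
    (h2.differentiableAt.hasGradientAt).unique h2
  rw [h3, InnerProductSpace.toDual_symm_apply]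
  simp [hL]

lemma ray_deriv_nonpos {F : Type*} [NormedAddCommGroup F] [NormedSpace ℝ F]
    (g : F → ℝ) (y0 w : F) (c : ℝ)
    (hφ : HasDerivAt (fun s : ℝ => g (y0 + s • w)) c 0)
    (s₀ : ℝ) (hs₀ : 0 < s₀)
    (hle : ∀ s : ℝ, 0 < s → s ≤ s₀ → g (y0 + s • w) ≤ g y0) : c ≤ 0 := by
  have hten : Tendsto (slope (fun s : ℝ => g (y0 + s • w)) 0) (𝓝[>] 0) (𝓝 c) :=
    (hasDerivAt_iff_tendsto_slope.mp hφ).mono_left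
      (nhdsWithin_mono 0 (fun s hs => ne_of_gt hs))
  refine le_of_tendsto hten ?_
  filter_upwards [Ioc_mem_nhdsGT hs₀] with s hs
  rw [slope_def_field]
  have h1 : g (y0 + s • w) ≤ g y0 := hle s hs.1 hs.2
  have : g (y0 + s • w) - g (y0 + (0:ℝ) • w) ≤ 0 := by simpa using h1
  rw [sub_zero]
  exact div_nonpos_of_nonpos_of_nonneg this hs.1.le

set_option maxHeartbeats 1000000 in
/-- First-order necessary conditions at a local minimax point on closed convex sets,
together with the interior (unconstrained) specialization. -/
theorem localMinimax_firstOrder_necessary {n m : ℕ}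
    (X : Set (EuclideanSpace ℝ (Fin n))) (Y : Set (EuclideanSpace ℝ (Fin m)))
    (hXne : X.Nonempty) (hYne : Y.Nonempty)
    (hXc : IsClosed X) (hYc : IsClosed Y) (hXconv : Convex ℝ X) (hYconv : Convex ℝ Y)
    (f : EuclideanSpace ℝ (Fin n) → EuclideanSpace ℝ (Fin m) → ℝ)
    (hf : ContDiff ℝ 1 (fun p : EuclideanSpace ℝ (Fin n) × EuclideanSpace ℝ (Fin m) => f p.1 p.2))
    (xstar : EuclideanSpace ℝ (Fin n)) (ystar : EuclideanSpace ℝ (Fin m))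
    (hxX : xstar ∈ X) (hyY : ystar ∈ Y)
    (hmm : IsLocalMinimax X Y f xstar ystar) :
    (∀ x ∈ X, 0 ≤ ⟪gradient (fun x' => f x' ystar) xstar, x - xstar⟫) ∧
    (∀ y ∈ Y, ⟪gradient (fun y' => f xstar y') ystar, y - ystar⟫ ≤ 0) ∧
    (xstar ∈ interior X → ystar ∈ interior Y →
      gradient (fun x' => f x' ystar) xstar = 0 ∧
      gradient (fun y' => f xstar y') ystar = 0) := by
  classical
  set Ff : EuclideanSpace ℝ (Fin n) × EuclideanSpace ℝ (Fin m) → ℝ :=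
    fun p => f p.1 p.2 with hFf
  have hdiff : Differentiable ℝ Ff := hf.differentiable one_ne_zero
  set D := fderiv ℝ Ff (xstar, ystar) with hDdef
  obtain ⟨⟨ε, hε, hmax⟩, ⟨εs, hεpos, hεlim, hδ⟩⟩ := hmm
  have hcont : Continuous (fderiv ℝ Ff) := hf.continuous_fderiv one_ne_zero
  -- x part
  have keyX : ∀ x ∈ X, 0 ≤ ⟪gradient (fun x' => f x' ystar) xstar, x - xstar⟫ := by
    intro x hx
    rw [grad_pair_x f hf]
    have hrwD : fderiv ℝ (fun p : EuclideanSpace ℝ (Fin n) × EuclideanSpace ℝ (Fin m) =>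
        f p.1 p.2) (xstar, ystar) = D := rfl
    rw [hrwD]
    set v := x - xstar with hv
    have hkey : ∀ η : ℝ, 0 < η → 0 ≤ D (v, 0) + η * ‖v‖ := by
      intro η hη
      -- continuity of the derivative at (xstar, ystar)
      obtain ⟨ρ, hρ, hρball⟩ := Metric.continuousAt_iff.mp (hcont.continuousAt (x := (xstar, ystar))) η hη
      -- pick k with small epsilon
      obtain ⟨k, hk⟩ := (hεlim.eventually_lt_const (lt_min hε hρ)).exists
      set εk := εs k with hεk
      have hεkpos : 0 < εk := hεpos k
      obtain ⟨δ, hδpos, hminloc⟩ := hδ k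
      set t := min 1 (min δ (ρ / 2) / (‖v‖ + 1)) with ht
      have hvn : (0:ℝ) ≤ ‖v‖ := norm_nonneg v
      have hmpos : 0 < min δ (ρ / 2) := lt_min hδpos (by linarith)
      have ht0 : 0 < t := lt_min one_pos (div_pos hmpos (by linarith))
      have ht1 : t ≤ 1 := min_le_left _ _
      have htv : t * ‖v‖ ≤ min δ (ρ / 2) := by
        have h1 : t ≤ min δ (ρ / 2) / (‖v‖ + 1) := min_le_right _ _
        have h2 : t * ‖v‖ ≤ (min δ (ρ / 2) / (‖v‖ + 1)) * ‖v‖ :=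
          mul_le_mul_of_nonneg_right h1 hvn
        have h3 : (min δ (ρ / 2) / (‖v‖ + 1)) * ‖v‖ ≤ min δ (ρ / 2) := by
          rw [div_mul_eq_mul_div, div_le_iff₀ (by linarith)]
          nlinarith
        linarith
      set xt := xstar + t • v with hxt
      have hxtX : xt ∈ X := by
        have := hXconv hxX hx (by linarith : (0:ℝ) ≤ 1 - t) ht0.le (by ring)
        convert this using 1
        rw [hxt, hv]
        module
      have hnormtv : ‖t • v‖ = t * ‖v‖ := by
        rw [norm_smul, Real.norm_eq_abs, abs_of_pos ht0]
      have hxtd : ‖xt - xstar‖ ≤ δ := by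
        rw [hxt, add_sub_cancel_left, hnormtv]
        exact htv.trans (min_le_left _ _)
      have henv := hminloc xt hxtX hxtd
      -- lower bound for envU at xstar
      have hyS : ystar ∈ {y ∈ Y | ‖y - ystar‖ ≤ εk} := by
        refine ⟨hyY, ?_⟩
        simp [hεkpos.le]
      have hlow : ((f xstar ystar : ℝ) : EReal) ≤ envU f Y ystar εk xstar := by
        exact le_iSup₂ (f := fun y (_ : y ∈ {y ∈ Y | ‖y - ystar‖ ≤ εk}) =>
          ((f xstar y : ℝ) : EReal)) ystar hyS
      -- upper bound for envU at xt
      have hup : envU f Y ystar εk xt ≤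
          ((f xstar ystar + (t * D (v, 0) + η * (t * ‖v‖)) : ℝ) : EReal) := by
        refine iSup₂_le fun y hy => ?_
        obtain ⟨hyY', hyd⟩ := hy
        have hεkρ : εk < ρ := hk.trans_le (min_le_right _ _)
        have hεkε : εk ≤ ε := (hk.trans_le (min_le_left _ _)).le
        -- mean value estimate on the ball of radius ρ
        have hmem1 : ((xstar, y) : EuclideanSpace ℝ (Fin n) × EuclideanSpace ℝ (Fin m)) ∈
            Metric.ball (xstar, ystar) ρ := by
          rw [Metric.mem_ball, Prod.dist_eq, dist_eq_norm, dist_eq_norm]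
          simp only [sub_self, norm_zero]
          rw [max_lt_iff]
          constructor
          · exact hρ
          · exact lt_of_le_of_lt hyd hεkρ
        have hmem2 : ((xt, y) : EuclideanSpace ℝ (Fin n) × EuclideanSpace ℝ (Fin m)) ∈
            Metric.ball (xstar, ystar) ρ := by
          rw [Metric.mem_ball, Prod.dist_eq, dist_eq_norm, dist_eq_norm]
          rw [max_lt_iff]
          constructor
          · rw [hxt, add_sub_cancel_left, hnormtv]
            have := htv.trans (min_le_right _ _)
            linarith
          · exact lt_of_le_of_lt hyd hεkρ
        have hbound : ∀ p ∈ Metric.ball ((xstar, ystar) :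
            EuclideanSpace ℝ (Fin n) × EuclideanSpace ℝ (Fin m)) ρ,
            ‖fderiv ℝ Ff p - D‖ ≤ η := by
          intro p hp
          have := hρball (Metric.mem_ball.mp hp)
          rw [dist_eq_norm] at this
          exact this.le
        have hmvt := Convex.norm_image_sub_le_of_norm_fderiv_le'
          (fun p _ => hdiff p) hbound (convex_ball _ _) hmem1 hmem2
        have hdiffpt : ((xt, y) : EuclideanSpace ℝ (Fin n) × EuclideanSpace ℝ (Fin m)) -
            (xstar, y) = (t • v, 0) := by
          simp [hxt]
        rw [hdiffpt] at hmvt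
        have hDsmul : D (t • v, (0 : EuclideanSpace ℝ (Fin m))) = t * D (v, 0) := by
          have : ((t • v, (0 : EuclideanSpace ℝ (Fin m)))) = t • ((v, 0) :
              EuclideanSpace ℝ (Fin n) × EuclideanSpace ℝ (Fin m)) := by
            simp [Prod.smul_def]
          rw [this, map_smul]
          simp
        have hnormpair : ‖((t • v, (0 : EuclideanSpace ℝ (Fin m))) :
            EuclideanSpace ℝ (Fin n) × EuclideanSpace ℝ (Fin m))‖ = t * ‖v‖ := by
          rw [Prod.norm_def]
          simp [hnormtv, le_max_iff, mul_nonneg ht0.le hvn]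
        rw [hDsmul, hnormpair] at hmvt
        have habs := abs_le.mp (by rwa [Real.norm_eq_abs] at hmvt)
        have hFxt : Ff (xt, y) = f xt y := rfl
        have hFxs : Ff (xstar, y) = f xstar y := rfl
        have hfy : f xstar y ≤ f xstar ystar := hmax y hyY' (hyd.trans hεkε)
        rw [hFxt, hFxs] at habs
        rw [EReal.coe_le_coe_iff]
        nlinarith [habs.2]
      have hfinal : ((f xstar ystar : ℝ) : EReal) ≤
          ((f xstar ystar + (t * D (v, 0) + η * (t * ‖v‖)) : ℝ) : EReal) :=
        hlow.trans (henv.trans hup)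
      rw [EReal.coe_le_coe_iff] at hfinal
      nlinarith [ht0]
    -- conclude from ∀ η > 0
    by_contra hneg
    push_neg at hneg
    have hvn : (0:ℝ) ≤ ‖v‖ := norm_nonneg v
    have hη : 0 < -D (v, 0) / (‖v‖ + 1) := div_pos (by linarith) (by linarith)
    have := hkey _ hη
    rw [div_mul_eq_mul_div] at this
    have hlt : -D (v, 0) * ‖v‖ / (‖v‖ + 1) < -D (v, 0) := by
      rw [div_lt_iff₀ (by linarith)]
      nlinarith
    linarith
  -- y part
  have keyY : ∀ y ∈ Y, ⟪gradient (fun y' => f xstar y') ystar, y - ystar⟫ ≤ 0 := by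
    intro y hy
    rw [grad_pair_y f hf]
    have hrwD : fderiv ℝ (fun p : EuclideanSpace ℝ (Fin n) × EuclideanSpace ℝ (Fin m) =>
        f p.1 p.2) (xstar, ystar) = D := rfl
    rw [hrwD]
    set w := y - ystar with hw
    have hvn : (0:ℝ) ≤ ‖w‖ := norm_nonneg w
    have hφ : HasDerivAt (fun s : ℝ => f xstar (ystar + s • w)) (D (0, w)) 0 := by
      have hγ : HasDerivAt (fun s : ℝ => ((xstar, ystar + s • w) :
          EuclideanSpace ℝ (Fin n) × EuclideanSpace ℝ (Fin m)))
          ((0 : EuclideanSpace ℝ (Fin n)), w) 0 := by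
        refine HasDerivAt.prodMk (hasDerivAt_const _ _) ?_
        have : HasDerivAt (fun s : ℝ => s • w) ((1:ℝ) • w) 0 :=
          (hasDerivAt_id 0).smul_const w
        simpa using this.const_add ystar
      have hF : HasFDerivAt Ff D ((fun s : ℝ => ((xstar, ystar + s • w) :
          EuclideanSpace ℝ (Fin n) × EuclideanSpace ℝ (Fin m))) 0) := by
        simpa using (hdiff (xstar, ystar)).hasFDerivAt
      exact hF.comp_hasDerivAt 0 hγ
    set s₀ := min 1 (ε / (‖w‖ + 1)) with hs₀def
    have hs₀ : 0 < s₀ := lt_min one_pos (div_pos hε (by linarith))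
    refine ray_deriv_nonpos (fun y' => f xstar y') ystar w _ hφ s₀ hs₀ ?_
    intro s hs hss
    have hs1 : s ≤ 1 := hss.trans (min_le_left _ _)
    have hmemY : ystar + s • w ∈ Y := by
      have := hYconv hyY hy (by linarith : (0:ℝ) ≤ 1 - s) hs.le (by ring)
      convert this using 1
      rw [hw]
      module
    have hnorm : ‖(ystar + s • w) - ystar‖ ≤ ε := by
      rw [add_sub_cancel_left, norm_smul, Real.norm_eq_abs, abs_of_pos hs]
      have h1 : s ≤ ε / (‖w‖ + 1) := hss.trans (min_le_right _ _)
      have h2 : s * ‖w‖ ≤ (ε / (‖w‖ + 1)) * ‖w‖ := mul_le_mul_of_nonneg_right h1 hvn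
      have h3 : (ε / (‖w‖ + 1)) * ‖w‖ ≤ ε := by
        rw [div_mul_eq_mul_div, div_le_iff₀ (by linarith)]
        nlinarith
      linarith
    exact hmax _ hmemY hnorm
  refine ⟨keyX, keyY, ?_⟩
  intro hxi hyi
  constructor
  · -- gradient in x is zero
    obtain ⟨r, hr, hball⟩ := Metric.mem_nhds_iff.mp (mem_interior_iff_mem_nhds.mp hxi)
    have hall : ∀ u : EuclideanSpace ℝ (Fin n),
        0 ≤ ⟪gradient (fun x' => f x' ystar) xstar, u⟫ := by
      intro u
      have hun : (0:ℝ) ≤ ‖u‖ := norm_nonneg u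
      set c := r / (2 * (‖u‖ + 1)) with hc
      have hc0 : 0 < c := div_pos hr (by linarith)
      have hmem : xstar + c • u ∈ X := by
        apply hball
        rw [Metric.mem_ball, dist_eq_norm, add_sub_cancel_left, norm_smul,
          Real.norm_eq_abs, abs_of_pos hc0]
        rw [hc, div_mul_eq_mul_div, div_lt_iff₀ (by linarith)]
        nlinarith
      have := keyX _ hmem
      rw [add_sub_cancel_left, real_inner_smul_right] at this
      exact nonneg_of_mul_nonneg_right this hc0
    have h1 := hall (gradient (fun x' => f x' ystar) xstar)
    have h2 := hall (-(gradient (fun x' => f x' ystar) xstar))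
    rw [inner_neg_right] at h2
    have : ⟪gradient (fun x' => f x' ystar) xstar,
        gradient (fun x' => f x' ystar) xstar⟫ = 0 := le_antisymm (by linarith) h1
    exact inner_self_eq_zero.mp this
  · -- gradient in y is zero
    obtain ⟨r, hr, hball⟩ := Metric.mem_nhds_iff.mp (mem_interior_iff_mem_nhds.mp hyi)
    have hall : ∀ u : EuclideanSpace ℝ (Fin m),
        ⟪gradient (fun y' => f xstar y') ystar, u⟫ ≤ 0 := by
      intro u
      have hun : (0:ℝ) ≤ ‖u‖ := norm_nonneg u
      set c := r / (2 * (‖u‖ + 1)) with hc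
      have hc0 : 0 < c := div_pos hr (by linarith)
      have hmem : ystar + c • u ∈ Y := by
        apply hball
        rw [Metric.mem_ball, dist_eq_norm, add_sub_cancel_left, norm_smul,
          Real.norm_eq_abs, abs_of_pos hc0]
        rw [hc, div_mul_eq_mul_div, div_lt_iff₀ (by linarith)]
        nlinarith
      have := keyY _ hmem
      rw [add_sub_cancel_left, real_inner_smul_right] at this
      exact nonpos_of_mul_nonpos_right this hc0
    have h1 := hall (gradient (fun y' => f xstar y') ystar)
    have h2 := hall (-(gradient (fun y' => f xstar y') ystar))
    rw [inner_neg_right] at h2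
    have : ⟪gradient (fun y' => f xstar y') ystar,
        gradient (fun y' => f xstar y') ystar⟫ = 0 := le_antisymm h1 (by linarith)
    exact inner_self_eq_zero.mp this
end

section
/- Let X ⊆ ℝ^n be nonempty and Y ⊆ ℝ^m be nonempty and closed, and let f : ℝ^n × ℝ^m → ℝ be such that f and ∂_x f are (jointly) continuous. Suppose (x*,y*) ∈ X × Y satisfies: (i) there is ε₀' > 0 with f(x*,y) ≤ f(x*,y*) for all y ∈ Y with ‖y − y*‖ ≤ ε₀'; and (ii) there is ε₀ ∈ (0, ε₀'] such that for every ε ∈ (0, ε₀) and every nonzero vector t in the contingent (Bouligand) tangent cone to X at x*, there exists y ∈ Y₀(x*;ε) with ⟨∂_x f(x*,y), t⟩ > 0, where Y₀(x*;ε) := { y ∈ Y : ‖y − y*‖ ≤ ε and f(x*,y) = f̄_{ε,y*}(x*) }. Then (x*,y*) is a local minimax point of f. -/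
open Filter
open scoped RealInnerProductSpace

/-- The contingent (Bouligand) tangent cone to `X` at `x`. -/
def contingentCone {n : ℕ} (X : Set (EuclideanSpace ℝ (Fin n)))
    (x : EuclideanSpace ℝ (Fin n)) : Set (EuclideanSpace ℝ (Fin n)) :=
  {t | ∃ α : ℕ → ℝ, ∃ tk : ℕ → EuclideanSpace ℝ (Fin n),
    (∀ k, 0 < α k) ∧ Tendsto α atTop (nhds 0) ∧ Tendsto tk atTop (nhds t) ∧
    ∀ k, x + α k • tk k ∈ X}

/-- Zeroth-order active set `Y₀(x*; ε)`. -/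
def activeSet {n m : ℕ}
    (f : EuclideanSpace ℝ (Fin n) → EuclideanSpace ℝ (Fin m) → ℝ)
    (Y : Set (EuclideanSpace ℝ (Fin m)))
    (xstar : EuclideanSpace ℝ (Fin n)) (ystar : EuclideanSpace ℝ (Fin m)) (ε : ℝ) :
    Set (EuclideanSpace ℝ (Fin m)) :=
  {y ∈ Y | ‖y - ystar‖ ≤ ε ∧ ((f xstar y : ℝ) : EReal) = envU f Y ystar ε xstar}

set_option maxHeartbeats 1000000 in
/-- First-order sufficient condition for a local minimax point. -/
theorem localMinimax_of_firstOrder_sufficient {n m : ℕ}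
    (X : Set (EuclideanSpace ℝ (Fin n))) (Y : Set (EuclideanSpace ℝ (Fin m)))
    (hXne : X.Nonempty) (hYne : Y.Nonempty) (hYc : IsClosed Y)
    (f : EuclideanSpace ℝ (Fin n) → EuclideanSpace ℝ (Fin m) → ℝ)
    (hfc : Continuous (fun p : EuclideanSpace ℝ (Fin n) × EuclideanSpace ℝ (Fin m) => f p.1 p.2))
    (hgradc : Continuous (fun p : EuclideanSpace ℝ (Fin n) × EuclideanSpace ℝ (Fin m) =>
      gradient (fun x' => f x' p.2) p.1))
    (xstar : EuclideanSpace ℝ (Fin n)) (ystar : EuclideanSpace ℝ (Fin m))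
    (hxX : xstar ∈ X) (hyY : ystar ∈ Y)
    (ε₀' : ℝ) (hε₀' : 0 < ε₀')
    (hmax : ∀ y ∈ Y, ‖y - ystar‖ ≤ ε₀' → f xstar y ≤ f xstar ystar)
    (ε₀ : ℝ) (hε₀pos : 0 < ε₀) (hε₀le : ε₀ ≤ ε₀')
    (hpos : ∀ ε : ℝ, 0 < ε → ε < ε₀ →
      ∀ t ∈ contingentCone X xstar, t ≠ 0 →
        ∃ y ∈ activeSet f Y xstar ystar ε, 0 < ⟪gradient (fun x' => f x' y) xstar, t⟫) :
    IsLocalMinimax X Y f xstar ystar := by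
  -- Main step: for every ε ∈ (0, ε₀), x* is a local minimizer of the envelope on X.
  have key : ∀ ε : ℝ, 0 < ε → ε < ε₀ → ∃ δ > (0:ℝ), ∀ x ∈ X, ‖x - xstar‖ ≤ δ →
      envU f Y ystar ε xstar ≤ envU f Y ystar ε x := by
    intro ε hεpos hεlt
    by_contra hcon
    push_neg at hcon
    -- extract a sequence x_j → x* in X with envU x_j < envU x*
    have hx : ∀ j : ℕ, ∃ x ∈ X, ‖x - xstar‖ ≤ 1/((j:ℝ)+1) ∧
        envU f Y ystar ε x < envU f Y ystar ε xstar := by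
      intro j
      obtain ⟨x, hxX', hxd, hxlt⟩ := hcon (1/((j:ℝ)+1)) (by positivity)
      exact ⟨x, hxX', hxd, hxlt⟩
    choose xs hxsX hxsd hxslt using hx
    have hxsne : ∀ j, xs j ≠ xstar := by
      intro j h
      exact lt_irrefl _ (h ▸ hxslt j)
    set α : ℕ → ℝ := fun j => ‖xs j - xstar‖ with hα
    have hαpos : ∀ j, 0 < α j := fun j =>
      norm_pos_iff.mpr (sub_ne_zero_of_ne (hxsne j))
    set tk : ℕ → EuclideanSpace ℝ (Fin n) := fun j => (α j)⁻¹ • (xs j - xstar) with htk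
    have htknorm : ∀ j, ‖tk j‖ = 1 := by
      intro j
      rw [htk]
      simp only [norm_smul, norm_inv, Real.norm_eq_abs, abs_of_pos (hαpos j)]
      exact inv_mul_cancel₀ (ne_of_gt (hαpos j))
    have htkmem : ∀ j, tk j ∈ Metric.sphere (0 : EuclideanSpace ℝ (Fin n)) 1 := by
      intro j; rw [mem_sphere_zero_iff_norm]; exact htknorm j
    obtain ⟨t, htmem, φ, hφ, htt⟩ :=
      (isCompact_sphere (0 : EuclideanSpace ℝ (Fin n)) 1).tendsto_subseq htkmem
    have htne : t ≠ 0 := by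
      intro h
      have := mem_sphere_zero_iff_norm.mp htmem
      rw [h, norm_zero] at this; norm_num at this
    have hαtend : Tendsto α atTop (nhds 0) := by
      have h0 : Tendsto (fun j : ℕ => 1/((j:ℝ)+1)) atTop (nhds 0) :=
        tendsto_one_div_add_atTop_nhds_zero_nat
      exact squeeze_zero (fun j => (hαpos j).le) hxsd h0
    have hreconstruct : ∀ j, xstar + α j • tk j = xs j := by
      intro j
      rw [htk, smul_inv_smul₀ (ne_of_gt (hαpos j))]
      abel
    have htcone : t ∈ contingentCone X xstar := by
      refine ⟨α ∘ φ, tk ∘ φ, fun j => hαpos (φ j), hαtend.comp hφ.tendsto_atTop, htt, ?_⟩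
      intro j
      rw [Function.comp_apply, Function.comp_apply, hreconstruct]
      exact hxsX (φ j)
    obtain ⟨y, hy, hinner⟩ := hpos ε hεpos hεlt t htcone htne
    obtain ⟨hyY', hydist, hyenv⟩ := hy
    -- continuity of (x', t') ↦ ⟪∇ₓ f(x', y), t'⟫
    set G : EuclideanSpace ℝ (Fin n) → EuclideanSpace ℝ (Fin n) :=
      fun x' => gradient (fun x'' => f x'' y) x' with hG
    have hGc : Continuous G := by
      have : Continuous (fun x' : EuclideanSpace ℝ (Fin n) => (x', y)) := by continuity
      exact hgradc.comp this
    set c : ℝ := ⟪G xstar, t⟫ with hc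
    have hFc : Continuous (fun p : EuclideanSpace ℝ (Fin n) × EuclideanSpace ℝ (Fin n) =>
        ⟪G p.1, p.2⟫) := (hGc.comp continuous_fst).inner continuous_snd
    have hev : ∀ᶠ p : EuclideanSpace ℝ (Fin n) × EuclideanSpace ℝ (Fin n) in
        nhds (xstar, t), c/2 < ⟪G p.1, p.2⟫ := by
      have := hFc.continuousAt (x := (xstar, t))
      exact this.eventually (eventually_gt_nhds (by simpa [hc] using half_lt_self hinner))
    obtain ⟨r, hrpos, hr⟩ := Metric.eventually_nhds_iff.mp hev
    -- pick an index far along the subsequence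
    have hev1 : ∀ᶠ j in atTop, α (φ j) < r :=
      (hαtend.comp hφ.tendsto_atTop).eventually_lt_const hrpos
    have hev2 : ∀ᶠ j in atTop, dist (tk (φ j)) t < r :=
      Metric.tendsto_nhds.mp htt r hrpos
    obtain ⟨K, hK1, hK2⟩ := (hev1.and hev2).exists
    set k := φ K with hk
    set v : EuclideanSpace ℝ (Fin n) := xs k - xstar with hv
    -- along the segment, the directional derivative is positive
    have hseg : ∀ s : ℝ, s ∈ Set.Icc (0:ℝ) 1 → c/2 < ⟪G (xstar + s • v), tk k⟫ := by
      intro s hs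
      have hr' : ∀ (a : EuclideanSpace ℝ (Fin n)) (b : EuclideanSpace ℝ (Fin n)),
          dist (a, b) (xstar, t) < r → c/2 < ⟪G a, b⟫ := fun a b h => hr h
      apply hr' (xstar + s • v) (tk k)
      rw [Prod.dist_eq]
      apply max_lt
      · rw [dist_eq_norm]
        simp only [add_sub_cancel_left, norm_smul, Real.norm_eq_abs,
          abs_of_nonneg hs.1]
        calc s * ‖v‖ ≤ 1 * ‖v‖ := by
              apply mul_le_mul_of_nonneg_right hs.2 (norm_nonneg _)
          _ = α k := by rw [one_mul]
          _ < r := hK1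
      · exact hK2
    have hcpos : 0 < c/2 := by positivity
    -- differentiability along the segment
    have hdiff : ∀ s : ℝ, s ∈ Set.Icc (0:ℝ) 1 →
        DifferentiableAt ℝ (fun x'' => f x'' y) (xstar + s • v) := by
      intro s hs
      by_contra h
      have h0 : G (xstar + s • v) = 0 := gradient_eq_zero_of_not_differentiableAt h
      have := hseg s hs
      rw [h0] at this
      simp at this
      linarith
    -- the 1-d function g
    set g : ℝ → ℝ := fun s => f (xstar + s • v) y with hg
    have hgderiv : ∀ s : ℝ, s ∈ Set.Icc (0:ℝ) 1 →
        HasDerivAt g (⟪G (xstar + s • v), v⟫) s := by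
      intro s hs
      have hcurve : HasDerivAt (fun s : ℝ => xstar + s • v) v s := by
        simpa using ((hasDerivAt_id s).smul_const v).const_add xstar
      have hgrad := (hdiff s hs).hasGradientAt
      have hfd := hgrad.hasFDerivAt
      have hkey := hfd.comp_hasDerivAt s hcurve
      have heq : ((InnerProductSpace.toDual ℝ (EuclideanSpace ℝ (Fin n)))
          (G (xstar + s • v))) v = ⟪G (xstar + s • v), v⟫ :=
        InnerProductSpace.toDual_apply_apply
      rw [← heq]
      exact hkey
    have hgmono : StrictMonoOn g (Set.Icc (0:ℝ) 1) := by
      apply strictMonoOn_of_deriv_pos (convex_Icc 0 1)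
      · intro s hs
        exact ((hgderiv s hs).continuousAt).continuousWithinAt
      · intro s hs
        rw [interior_Icc] at hs
        have hs' : s ∈ Set.Icc (0:ℝ) 1 := ⟨hs.1.le, hs.2.le⟩
        rw [(hgderiv s hs').deriv]
        have hvtk : v = α k • tk k := by
          rw [htk, smul_inv_smul₀ (ne_of_gt (hαpos k))]
        have h1 := hseg s hs'
        have h2 : (⟪G (xstar + s • v), v⟫ : ℝ)
            = α k * ⟪G (xstar + s • v), tk k⟫ := by
          nth_rewrite 2 [hvtk]
          exact real_inner_smul_right _ _ _
        rw [h2]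
        exact mul_pos (hαpos k) (lt_trans hcpos h1)
    have hglt : g 0 < g 1 :=
      hgmono (Set.left_mem_Icc.mpr zero_le_one) (Set.right_mem_Icc.mpr zero_le_one) zero_lt_one
    have hg0 : g 0 = f xstar y := by simp [hg]
    have hg1 : g 1 = f (xs k) y := by simp [hg, hv]
    -- contradiction with the envelope inequality
    have hle : ((f (xs k) y : ℝ) : EReal) ≤ envU f Y ystar ε (xs k) := by
      rw [envU]
      exact le_iSup₂_of_le y ⟨hyY', hydist⟩ le_rfl
    have hlt : ((f (xs k) y : ℝ) : EReal) < ((f xstar y : ℝ) : EReal) :=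
      lt_of_le_of_lt hle (lt_of_lt_of_eq (hxslt k) hyenv.symm)
    rw [EReal.coe_lt_coe_iff] at hlt
    rw [hg0, hg1] at hglt
    linarith
  refine ⟨⟨ε₀', hε₀', hmax⟩, fun k => ε₀ / ((k:ℝ) + 2), fun k => by positivity, ?_, ?_⟩
  · have h := (tendsto_const_div_atTop_nhds_zero_nat ε₀).comp (tendsto_add_atTop_nat 2)
    exact h.congr fun k => by push_cast [Function.comp]; ring
  · intro k
    apply key
    · positivity
    · rw [div_lt_iff₀ (by positivity)]
      nlinarith [hε₀pos]
end
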